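/- Let G be a P_5-free graph containing an induced 5-cycle C = v_1 v_2 v_3 v_4 v_5 v_1. Let S be the set of vertices with no neighbour on C, and R_i = {u : N_C(u) = {v_{i-1}, v_{i+1}}}, \bar{R}_i = {u : N_C(u) = {v_{i-1}, v_i, v_{i+1}}} (indices mod 5). Then S is anticomplete to R_i ∪ \bar{R}_i for every i. -/

import Mathlib

open SimpleGraph

/-- The paw: a triangle 0,1,2 plus vertex 3 adjacent only to 0. -/
def pawGraph : SimpleGraph (Fin 4) :=
  SimpleGraph.fromEdgeSet {s(0,1), s(0,2), s(1,2), s(0,3)}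

/-- The HVN: a K₄ on 0,1,2,3 plus vertex 4 adjacent to exactly 0 and 1. -/
def hvnGraph : SimpleGraph (Fin 5) :=
  SimpleGraph.fromEdgeSet {s(0,1), s(0,2), s(0,3), s(1,2), s(1,3), s(2,3), s(4,0), s(4,1)}

/-- The T-5-wheel: 5-cycle 0-1-2-3-4-0 plus vertex 5 adjacent to the three consecutive
vertices 4, 0, 1. -/
def t5WheelGraph : SimpleGraph (Fin 6) :=
  SimpleGraph.fromEdgeSet {s(0,1), s(1,2), s(2,3), s(3,4), s(4,0), s(5,4), s(5,0), s(5,1)}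

/-- The Y-5-wheel: 5-cycle 0-1-2-3-4-0 plus vertex 5 adjacent to 0, 1, 3
(three non-consecutive vertices). -/
def y5WheelGraph : SimpleGraph (Fin 6) :=
  SimpleGraph.fromEdgeSet {s(0,1), s(1,2), s(2,3), s(3,4), s(4,0), s(5,0), s(5,1), s(5,3)}

/-- `G` contains an induced copy of `H`: an injection preserving and reflecting adjacency. -/
def ContainsInduced {V W : Type*} (G : SimpleGraph V) (H : SimpleGraph W) : Prop :=
  ∃ f : W ↪ V, ∀ a b : W, H.Adj a b ↔ G.Adj (f a) (f b)

/-- `G` is `H`-free: no induced copy of `H`. -/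
def InducedFree {V W : Type*} (G : SimpleGraph V) (H : SimpleGraph W) : Prop :=
  ¬ ContainsInduced G H

/-- `v` lists the vertices of an induced (chordless) 5-cycle of `G`, in order. -/
def IsInducedC5 {V : Type*} (G : SimpleGraph V) (v : ZMod 5 → V) : Prop :=
  Function.Injective v ∧ ∀ i j : ZMod 5, G.Adj (v i) (v j) ↔ (j = i + 1 ∨ j = i - 1)

/-- The neighbourhood of `u` on the 5-cycle with vertices `v i`. -/
def cycNbhd {V : Type*} (G : SimpleGraph V) (v : ZMod 5 → V) (u : V) : Set V :=
  {w | (∃ i, w = v i) ∧ G.Adj u w}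

/-- In a P₅-free graph with an induced 5-cycle, the set `S` of vertices with no neighbour
on the cycle is anticomplete to every `R i ∪ R̄ i`. -/
theorem s_anticomplete_r {V : Type*} (G : SimpleGraph V)
    (hP5 : InducedFree G (pathGraph 5)) (v : ZMod 5 → V) (hC : IsInducedC5 G v) :
    ∀ s ∈ {u : V | cycNbhd G v u = (∅ : Set V)}, ∀ i : ZMod 5,
      ∀ b, (cycNbhd G v b = {v (i - 1), v (i + 1)} ∨
            cycNbhd G v b = {v (i - 1), v i, v (i + 1)}) → ¬ G.Adj s b := by
  rintro s hs i b hb hadj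
  obtain ⟨hinj, hadjC⟩ := hC
  have hS : cycNbhd G v s = ∅ := hs
  have hsv : ∀ j, ¬ G.Adj s (v j) := by
    intro j h
    have hm : v j ∈ cycNbhd G v s := ⟨⟨j, rfl⟩, h⟩
    rw [hS] at hm; exact hm
  have hm1 : i - 1 = i + 4 := by
    rw [sub_eq_add_neg]; exact congrArg (i + ·) (by decide)
  have hcyc : ∀ a c : ZMod 5, G.Adj (v (i+a)) (v (i+c)) ↔ (c = a + 1 ∨ c = a - 1) := by
    intro a c
    rw [hadjC, add_assoc, add_sub_assoc, add_right_inj, add_right_inj]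
  have hne : ∀ a c : ZMod 5, a ≠ c → v (i + a) ≠ v (i + c) :=
    fun a c h hv => h (add_left_cancel (hinj hv))
  have hbadj1 : G.Adj b (v (i+1)) := by
    rcases hb with hb|hb <;>
    · have hm : v (i+1) ∈ cycNbhd G v b := by rw [hb]; simp
      exact hm.2
  have hbadj4 : G.Adj b (v (i+4)) := by
    rw [← hm1]
    rcases hb with hb|hb <;>
    · have hm : v (i-1) ∈ cycNbhd G v b := by rw [hb]; simp
      exact hm.2
  have hbmem : ∀ c : ZMod 5, G.Adj b (v (i+c)) → c = 4 ∨ c = 0 ∨ c = 1 := by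
    intro c h
    have hm : v (i+c) ∈ cycNbhd G v b := ⟨⟨_, rfl⟩, h⟩
    rw [hm1] at hb
    rcases hb with hb|hb <;> rw [hb] at hm <;>
      simp only [Set.mem_insert_iff, Set.mem_singleton_iff] at hm
    · rcases hm with h'|h'
      · exact Or.inl (add_left_cancel (hinj h'))
      · exact Or.inr (Or.inr (add_left_cancel (hinj h')))
    · rcases hm with h'|h'|h'
      · exact Or.inl (add_left_cancel (hinj h'))
      · exact Or.inr (Or.inl (add_left_cancel (hinj (by rwa [add_zero]))))
      · exact Or.inr (Or.inr (add_left_cancel (hinj h')))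
  -- non-adjacencies
  have hnb2 : ¬ G.Adj b (v (i+2)) := fun h => by
    rcases hbmem 2 h with h'|h'|h' <;> exact absurd h' (by decide)
  have hnb3 : ¬ G.Adj b (v (i+3)) := fun h => by
    rcases hbmem 3 h with h'|h'|h' <;> exact absurd h' (by decide)
  have hn13 : ¬ G.Adj (v (i+1)) (v (i+3)) := fun h => by
    rcases (hcyc 1 3).mp h with h'|h' <;> exact absurd h' (by decide)
  have hc12 : G.Adj (v (i+1)) (v (i+2)) := (hcyc 1 2).mpr (Or.inl rfl)
  have hc23 : G.Adj (v (i+2)) (v (i+3)) := (hcyc 2 3).mpr (Or.inl rfl)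
  -- distinctness
  have hsb : s ≠ b := hadj.ne
  have hsvne : ∀ k : ZMod 5, s ≠ v (i+k) := by
    intro k h
    have : G.Adj (v (i+k)) (v (i+(k+1))) := (hcyc k (k+1)).mpr (Or.inl rfl)
    rw [← h] at this
    exact hsv _ this
  have hb1 : b ≠ v (i+1) := hbadj1.ne
  have hb2 : b ≠ v (i+2) := by
    intro h
    rw [h] at hbadj4
    rcases (hcyc 2 4).mp hbadj4 with h'|h' <;> exact absurd h' (by decide)
  have hb3 : b ≠ v (i+3) := by
    intro h
    rw [h] at hbadj1
    rcases (hcyc 3 1).mp hbadj1 with h'|h' <;> exact absurd h' (by decide)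
  have h12 : v (i+1) ≠ v (i+2) := hne 1 2 (by decide)
  have h13 : v (i+1) ≠ v (i+3) := hne 1 3 (by decide)
  have h23 : v (i+2) ≠ v (i+3) := hne 2 3 (by decide)
  -- build induced P5 : s - b - v(i+1) - v(i+2) - v(i+3)
  set f : Fin 5 → V := ![s, b, v (i+1), v (i+2), v (i+3)] with hf
  have finj : Function.Injective f := by
    intro a c h
    fin_cases a <;> fin_cases c <;>
      first
        | rfl
        | exact absurd h hsb
        | exact absurd h.symm hsb
        | exact absurd h (hsvne 1)
        | exact absurd h (hsvne 2)
        | exact absurd h (hsvne 3)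
        | exact absurd h.symm (hsvne 1)
        | exact absurd h.symm (hsvne 2)
        | exact absurd h.symm (hsvne 3)
        | exact absurd h hb1
        | exact absurd h hb2
        | exact absurd h hb3
        | exact absurd h.symm hb1
        | exact absurd h.symm hb2
        | exact absurd h.symm hb3
        | exact absurd h h12
        | exact absurd h h13
        | exact absurd h h23
        | exact absurd h.symm h12
        | exact absurd h.symm h13
        | exact absurd h.symm h23
  apply hP5
  refine ⟨⟨f, finj⟩, ?_⟩
  intro a c
  fin_cases a <;> fin_cases c <;>
    first
      | exact iff_of_true (by rw [pathGraph_adj]; decide) hadj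
      | exact iff_of_true (by rw [pathGraph_adj]; decide) hadj.symm
      | exact iff_of_true (by rw [pathGraph_adj]; decide) hbadj1
      | exact iff_of_true (by rw [pathGraph_adj]; decide) hbadj1.symm
      | exact iff_of_true (by rw [pathGraph_adj]; decide) hc12
      | exact iff_of_true (by rw [pathGraph_adj]; decide) hc12.symm
      | exact iff_of_true (by rw [pathGraph_adj]; decide) hc23
      | exact iff_of_true (by rw [pathGraph_adj]; decide) hc23.symm
      | exact iff_of_false (by rw [pathGraph_adj]; decide) (fun h => G.irrefl h)
      | exact iff_of_false (by rw [pathGraph_adj]; decide) (hsv (i+1))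
      | exact iff_of_false (by rw [pathGraph_adj]; decide) (hsv (i+2))
      | exact iff_of_false (by rw [pathGraph_adj]; decide) (hsv (i+3))
      | exact iff_of_false (by rw [pathGraph_adj]; decide) (fun h => hsv (i+1) h.symm)
      | exact iff_of_false (by rw [pathGraph_adj]; decide) (fun h => hsv (i+2) h.symm)
      | exact iff_of_false (by rw [pathGraph_adj]; decide) (fun h => hsv (i+3) h.symm)
      | exact iff_of_false (by rw [pathGraph_adj]; decide) hnb2
      | exact iff_of_false (by rw [pathGraph_adj]; decide) hnb3
      | exact iff_of_false (by rw [pathGraph_adj]; decide) (fun h => hnb2 h.symm)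
      | exact iff_of_false (by rw [pathGraph_adj]; decide) (fun h => hnb3 h.symm)
      | exact iff_of_false (by rw [pathGraph_adj]; decide) hn13
      | exact iff_of_false (by rw [pathGraph_adj]; decide) (fun h => hn13 h.symm)
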